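/- Thin higher homotopy groups are abelian: for n ≥ 2 and X a topological space with basepoint, the n-th thin loop group πₙ¹(X), defined as the quotient of based maps Sⁿ → X by thin homotopy, is an abelian group; the usual Eckmann–Hilton interchange homotopy between f·g and g·f can be realized by a homotopy whose image is contained in the union of the images of f and g (i.e. a thin homotopy). -/

import Mathlib

open Topology Topology.Homotopy
open scoped unitInterval

variable {X : Type*} [TopologicalSpace X] {x₀ : X}

/-- One step of thin homotopy between based `n`-loops: a homotopy rel boundary whose image
is contained in the union of the images of the two loops. -/
def ThinStep {N : Type*} (f g : Ω^ N X x₀) : Prop :=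
  ∃ H : ContinuousMap.HomotopyRel f.1 g.1 (Cube.boundary N),
    ∀ p : unitInterval × (I^ N), H p ∈ Set.range f.1 ∪ Set.range g.1

/-- Two based `n`-loops are *thin homotopic* if they are connected by a finite chain of
homotopies, each of whose image lies in the images of the maps involved. -/
def ThinHomotopicN {N : Type*} (f g : Ω^ N X x₀) : Prop :=
  ∃ (n : ℕ) (c : Fin (n + 1) → Ω^ N X x₀), c 0 = f ∧ c (Fin.last n) = g ∧
    ∀ i : Fin n, ThinStep (c i.castSucc) (c i.succ)

/-- The `n`-th thin loop space: based `n`-loops modulo thin homotopy. -/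
def ThinHomotopyGroup (n : ℕ) (X : Type*) [TopologicalSpace X] (x₀ : X) : Type _ :=
  Quot (@ThinHomotopicN X _ x₀ (Fin n))

open scoped unitInterval
open GenLoop Set Function

namespace ThinPf
set_option linter.unusedSectionVars false

variable {X : Type*} [TopologicalSpace X] {x₀ : X} {N : Type*} [DecidableEq N]

/-- Clamping a real number to the unit interval. -/
noncomputable abbrev pI (r : ℝ) : I := Set.projIcc 0 1 zero_le_one r

lemma pI_coe {r : ℝ} (h0 : 0 ≤ r) (h1 : r ≤ 1) : (pI r : ℝ) = r := by
  simp [Set.coe_projIcc, min_eq_right h1, max_eq_right h0]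

lemma pI_zero_of {r : ℝ} (h : r ≤ 0) : pI r = 0 := by
  apply Subtype.ext; simp [Set.coe_projIcc, min_eq_right (h.trans zero_le_one), max_eq_left h]

lemma pI_one_of {r : ℝ} (h : 1 ≤ r) : pI r = 1 := by
  apply Subtype.ext; simp [Set.coe_projIcc, min_eq_left h]

lemma pI_coe_I (s : I) : pI (s : ℝ) = s := Set.projIcc_val zero_le_one s

lemma transAt_apply (i : N) (f g : Ω^ N X x₀) (y : I^ N) :
    (GenLoop.transAt i f g).1 y =
      if (y i : ℝ) ≤ 1 / 2 then f.1 (update y i (pI (2 * y i)))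
      else g.1 (update y i (pI (2 * y i - 1))) := rfl

lemma symmAt_apply (i : N) (f : Ω^ N X x₀) (y : I^ N) :
    (GenLoop.symmAt i f).1 y = f.1 (update y i (σ (y i))) := by
  show f.1 (fun j => if j = i then σ (y i) else y j) = _
  congr 1; funext j; rw [Function.update_apply]

lemma update_mem_boundary_of_ne {y : I^ N} {j : N} (i : N) (s : I)
    (hj : y j = 0 ∨ y j = 1) (hji : j ≠ i) : update y i s ∈ Cube.boundary N :=
  ⟨j, by rwa [Function.update_of_ne hji]⟩

lemma update_mem_boundary (i : N) (y : I^ N) {s : I} (hs : s = 0 ∨ s = 1) :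
    update y i s ∈ Cube.boundary N :=
  ⟨i, by rwa [Function.update_self]⟩

/-- A homotopy rel boundary with image inside `S`. -/
def ThinIn (S : Set X) (f g : Ω^ N X x₀) : Prop :=
  ∃ H : ContinuousMap.HomotopyRel f.1 g.1 (Cube.boundary N),
    ∀ p : I × (I^ N), H p ∈ S

lemma thinStep_iff (f g : Ω^ N X x₀) :
    ThinStep f g ↔ ThinIn (Set.range f.1 ∪ Set.range g.1) f g := Iff.rfl

lemma ThinIn.mono {S T : Set X} {f g : Ω^ N X x₀} (h : ThinIn S f g) (hST : S ⊆ T) :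
    ThinIn T f g := by
  obtain ⟨H, hH⟩ := h; exact ⟨H, fun p => hST (hH p)⟩

lemma ThinIn.symm {S : Set X} {f g : Ω^ N X x₀} (h : ThinIn S f g) : ThinIn S g f := by
  obtain ⟨H, hH⟩ := h
  exact ⟨H.symm, fun p => hH (σ p.1, p.2)⟩

lemma ThinIn.trans {S : Set X} {f g h : Ω^ N X x₀} (h1 : ThinIn S f g) (h2 : ThinIn S g h) :
    ThinIn S f h := by
  obtain ⟨H, hH⟩ := h1; obtain ⟨K, hK⟩ := h2
  refine ⟨H.trans K, fun p => ?_⟩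
  rw [ContinuousMap.HomotopyRel.trans_apply]
  split_ifs
  · exact hH _
  · exact hK _

/-- The workhorse: a homotopy obtained by reparametrizing the `i`-th coordinate of a fixed
generalized loop `F` is a thin homotopy with image inside the range of `F`. -/
lemma thinIn_reparam (F f g : Ω^ N X x₀) (i : N) (E : I × I → ℝ) (hEc : Continuous E)
    (hE0 : ∀ t, E (t, 0) ≤ 0 ∨ 1 ≤ E (t, 0)) (hE1 : ∀ t, E (t, 1) ≤ 0 ∨ 1 ≤ E (t, 1))
    (h0 : ∀ y : I^ N, f.1 y = F.1 (update y i (pI (E (0, y i)))))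
    (h1 : ∀ y : I^ N, g.1 y = F.1 (update y i (pI (E (1, y i))))) :
    ThinIn (Set.range F.1) f g := by
  have hcont : Continuous fun p : I × (I^ N) => F.1 (update p.2 i (pI (E (p.1, p.2 i)))) := by
    refine F.1.continuous.comp ?_
    refine Continuous.update continuous_snd i ?_
    exact continuous_projIcc.comp (hEc.comp
      (continuous_fst.prodMk ((continuous_apply i).comp continuous_snd)))
  have key : ∀ t (y : I^ N), y ∈ Cube.boundary N →
      F.1 (update y i (pI (E (t, y i)))) = f.1 y := by
    intro t y hy
    obtain ⟨j, hj⟩ := hy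
    rw [f.2 y ⟨j, hj⟩]
    rcases eq_or_ne j i with hji | hji
    · rw [hji] at hj
      rcases hj with hj | hj
      · rw [hj]
        rcases hE0 t with h | h
        · rw [pI_zero_of h]; exact F.2 _ (update_mem_boundary i y (Or.inl rfl))
        · rw [pI_one_of h]; exact F.2 _ (update_mem_boundary i y (Or.inr rfl))
      · rw [hj]
        rcases hE1 t with h | h
        · rw [pI_zero_of h]; exact F.2 _ (update_mem_boundary i y (Or.inl rfl))
        · rw [pI_one_of h]; exact F.2 _ (update_mem_boundary i y (Or.inr rfl))
    · exact F.2 _ (update_mem_boundary_of_ne i _ hj hji)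
  refine ⟨⟨⟨⟨fun p => F.1 (update p.2 i (pI (E (p.1, p.2 i)))), hcont⟩, ?_, ?_⟩, ?_⟩,
    fun p => Set.mem_range_self _⟩
  · intro y; exact (h0 y).symm
  · intro y; exact (h1 y).symm
  · intro t y hy; exact key t y hy

lemma updpI_congr (F : Ω^ N X x₀) (i : N) (y : I^ N) {a b : ℝ} (h : a = b) :
    F.1 (update y i (pI a)) = F.1 (update y i (pI b)) := by rw [h]

lemma apply_updpI_of_le (F : Ω^ N X x₀) (i : N) (y : I^ N) {a : ℝ} (h : a ≤ 0) :
    F.1 (update y i (pI a)) = x₀ := by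
  rw [pI_zero_of h]; exact F.2 _ (update_mem_boundary i y (Or.inl rfl))

lemma apply_updpI_of_ge (F : Ω^ N X x₀) (i : N) (y : I^ N) {a : ℝ} (h : 1 ≤ a) :
    F.1 (update y i (pI a)) = x₀ := by
  rw [pI_one_of h]; exact F.2 _ (update_mem_boundary i y (Or.inr rfl))

lemma sigma_pI {r : ℝ} (h0 : 0 ≤ r) (h1 : r ≤ 1) : σ (pI r) = pI (1 - r) := by
  apply Subtype.ext
  rw [unitInterval.coe_symm_eq, pI_coe h0 h1, pI_coe (by linarith) (by linarith)]

lemma transAt_apply_updpI (i : N) (f g : Ω^ N X x₀) (y : I^ N) {r : ℝ}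
    (h0 : 0 ≤ r) (h1 : r ≤ 1) :
    (GenLoop.transAt i f g).1 (update y i (pI r)) =
      if r ≤ 1 / 2 then f.1 (update y i (pI (2 * r)))
      else g.1 (update y i (pI (2 * r - 1))) := by
  rw [transAt_apply]
  simp only [Function.update_self, Function.update_idem, pI_coe h0 h1]

lemma range_transAt_subset (i : N) (f g : Ω^ N X x₀) :
    Set.range (GenLoop.transAt i f g).1 ⊆ Set.range f.1 ∪ Set.range g.1 := by
  rintro x ⟨y, rfl⟩
  rw [transAt_apply]; split_ifs
  · exact Or.inl ⟨_, rfl⟩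
  · exact Or.inr ⟨_, rfl⟩

lemma range_transAt_left (i : N) (f g : Ω^ N X x₀) :
    Set.range f.1 ⊆ Set.range (GenLoop.transAt i f g).1 := by
  rintro x ⟨y, rfl⟩
  refine ⟨update y i (pI ((y i : ℝ) / 2)), ?_⟩
  have hb0 : (0:ℝ) ≤ (y i : ℝ) := (y i).2.1
  have hb1 : (y i : ℝ) ≤ 1 := (y i).2.2
  rw [transAt_apply_updpI i f g y (by linarith) (by linarith),
    if_pos (by linarith : (y i : ℝ) / 2 ≤ 1 / 2)]
  rw [updpI_congr f i y (by ring : 2 * ((y i : ℝ) / 2) = ((y i : I) : ℝ)), pI_coe_I,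
    Function.update_eq_self]

lemma range_transAt_right (i : N) (f g : Ω^ N X x₀) :
    Set.range g.1 ⊆ Set.range (GenLoop.transAt i f g).1 := by
  rintro x ⟨y, rfl⟩
  have hb0 : (0:ℝ) ≤ (y i : ℝ) := (y i).2.1
  have hb1 : (y i : ℝ) ≤ 1 := (y i).2.2
  rcases le_or_gt ((y i : ℝ)) 0 with h0 | h0
  · have hy0 : y i = 0 := Subtype.ext (le_antisymm h0 hb0)
    rw [g.2 y ⟨i, Or.inl hy0⟩]
    refine ⟨y, ?_⟩
    rw [transAt_apply, if_pos (by rw [hy0]; norm_num)]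
    exact apply_updpI_of_le f i y (by rw [hy0]; norm_num)
  · refine ⟨update y i (pI (((y i : ℝ) + 1) / 2)), ?_⟩
    rw [transAt_apply_updpI i f g y (by linarith) (by linarith),
      if_neg (by push_neg; linarith : ¬ ((y i : ℝ) + 1) / 2 ≤ 1 / 2)]
    rw [updpI_congr g i y (by ring : 2 * (((y i : ℝ) + 1) / 2) - 1 = ((y i : I) : ℝ)),
      pI_coe_I, Function.update_eq_self]

lemma basept_mem_range [Nonempty N] (f : Ω^ N X x₀) : x₀ ∈ Set.range f.1 :=
  ⟨fun _ => 0, f.2 _ ⟨Classical.arbitrary N, Or.inl rfl⟩⟩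

lemma range_const_subset {S : Set X} (hS : x₀ ∈ S) :
    Set.range (GenLoop.const : Ω^ N X x₀).1 ⊆ S := by
  rintro x ⟨y, rfl⟩; exact hS

lemma trans_const_apply (i : N) (f : Ω^ N X x₀) (y : I^ N) :
    (GenLoop.transAt i f GenLoop.const).1 y = f.1 (update y i (pI (2 * y i))) := by
  rw [transAt_apply]; split_ifs with h
  · rfl
  · exact (apply_updpI_of_ge f i y (by push_neg at h; linarith)).symm

lemma const_trans_apply (i : N) (f : Ω^ N X x₀) (y : I^ N) :
    (GenLoop.transAt i GenLoop.const f).1 y = f.1 (update y i (pI (2 * y i - 1))) := by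
  rw [transAt_apply]; split_ifs with h
  · exact (apply_updpI_of_le f i y (by linarith)).symm
  · rfl

/-- `f ∙ e` is thin homotopic to `f`. -/
lemma thin_mul_one (i : N) (f : Ω^ N X x₀) :
    ThinIn (Set.range f.1) (GenLoop.transAt i f GenLoop.const) f := by
  refine thinIn_reparam f _ f i (fun p => (2 - (p.1 : ℝ)) * (p.2 : ℝ)) (by fun_prop) ?_ ?_ ?_ ?_
  · intro t; left; norm_num
  · intro t; right
    show (1:ℝ) ≤ (2 - (t : ℝ)) * ((1:I) : ℝ)
    have h2 := t.2.2
    simp only [Set.Icc.coe_one, mul_one]; linarith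
  · intro y
    beta_reduce
    rw [trans_const_apply]
    exact updpI_congr f i y (by norm_num)
  · intro y
    beta_reduce
    rw [updpI_congr f i y (by norm_num : (2 - ((1:I) : ℝ)) * (y i : ℝ) = ((y i : I) : ℝ)),
      pI_coe_I, Function.update_eq_self]

/-- `e ∙ f` is thin homotopic to `f`. -/
lemma thin_one_mul (i : N) (f : Ω^ N X x₀) :
    ThinIn (Set.range f.1) (GenLoop.transAt i GenLoop.const f) f := by
  refine thinIn_reparam f _ f i
    (fun p => (2 - (p.1 : ℝ)) * (p.2 : ℝ) - (1 - (p.1 : ℝ))) (by fun_prop) ?_ ?_ ?_ ?_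
  · intro t; left
    show (2 - (t : ℝ)) * ((0:I) : ℝ) - (1 - (t : ℝ)) ≤ 0
    have h2 := t.2.2
    simp only [Set.Icc.coe_zero, mul_zero]; linarith
  · intro t; right
    show (1:ℝ) ≤ (2 - (t : ℝ)) * ((1:I) : ℝ) - (1 - (t : ℝ))
    simp only [Set.Icc.coe_one, mul_one]; linarith
  · intro y
    beta_reduce
    rw [const_trans_apply]
    exact updpI_congr f i y (by norm_num)
  · intro y
    beta_reduce
    rw [updpI_congr f i y
      (by norm_num : (2 - ((1:I) : ℝ)) * (y i : ℝ) - (1 - ((1:I) : ℝ)) = ((y i : I) : ℝ)),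
      pI_coe_I, Function.update_eq_self]

/-- Sliding `f` across the `i`-th coordinate: `f ∙ e` is thin homotopic to `e ∙ f`. -/
lemma thin_slide (i : N) (f : Ω^ N X x₀) :
    ThinIn (Set.range f.1) (GenLoop.transAt i f GenLoop.const)
      (GenLoop.transAt i GenLoop.const f) := by
  refine thinIn_reparam f _ _ i
    (fun p => 2 * (p.2 : ℝ) - (p.1 : ℝ)) (by fun_prop) ?_ ?_ ?_ ?_
  · intro t; left
    show 2 * ((0:I) : ℝ) - (t : ℝ) ≤ 0
    have h1 := t.2.1
    simp only [Set.Icc.coe_zero, mul_zero]; linarith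
  · intro t; right
    show (1:ℝ) ≤ 2 * ((1:I) : ℝ) - (t : ℝ)
    have h2 := t.2.2
    simp only [Set.Icc.coe_one, mul_one]; linarith
  · intro y
    beta_reduce
    rw [trans_const_apply]
    exact updpI_congr f i y (by norm_num)
  · intro y
    beta_reduce
    rw [const_trans_apply]
    exact updpI_congr f i y (by norm_num)

/-- `f⁻¹ ∙ f` is thin homotopic to the constant loop. -/
lemma thin_inv_mul (i : N) (f : Ω^ N X x₀) :
    ThinIn (Set.range f.1) (GenLoop.transAt i (GenLoop.symmAt i f) f) GenLoop.const := by
  refine thinIn_reparam f _ _ i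
    (fun p => (1 - (p.1 : ℝ)) * |2 * (p.2 : ℝ) - 1| + (p.1 : ℝ)) (by fun_prop) ?_ ?_ ?_ ?_
  · intro t; right
    show (1:ℝ) ≤ (1 - (t : ℝ)) * |2 * ((0:I) : ℝ) - 1| + (t : ℝ)
    rw [show 2 * ((0:I) : ℝ) - 1 = -1 by norm_num, abs_neg, abs_one]
    linarith
  · intro t; right
    show (1:ℝ) ≤ (1 - (t : ℝ)) * |2 * ((1:I) : ℝ) - 1| + (t : ℝ)
    rw [show 2 * ((1:I) : ℝ) - 1 = 1 by norm_num, abs_one]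
    linarith
  · intro y
    beta_reduce
    have hb0 : (0:ℝ) ≤ (y i : ℝ) := (y i).2.1
    have hb1 : (y i : ℝ) ≤ 1 := (y i).2.2
    rw [transAt_apply]; split_ifs with h
    · rw [symmAt_apply]
      simp only [Function.update_self, Function.update_idem]
      rw [sigma_pI (by linarith) (by linarith)]
      refine updpI_congr f i y ?_
      rw [abs_of_nonpos (by linarith : 2 * (y i : ℝ) - 1 ≤ 0)]
      norm_num
    · refine updpI_congr f i y ?_
      push_neg at h
      rw [abs_of_nonneg (by linarith : (0:ℝ) ≤ 2 * (y i : ℝ) - 1)]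
      norm_num
  · intro y
    beta_reduce
    show x₀ = _
    exact (apply_updpI_of_ge f i y (by norm_num)).symm

/-- `f ∙ f⁻¹` is thin homotopic to the constant loop. -/
lemma thin_mul_inv (i : N) (f : Ω^ N X x₀) :
    ThinIn (Set.range f.1) (GenLoop.transAt i f (GenLoop.symmAt i f)) GenLoop.const := by
  refine thinIn_reparam f _ _ i
    (fun p => (1 - (p.1 : ℝ)) * (1 - |2 * (p.2 : ℝ) - 1|)) (by fun_prop) ?_ ?_ ?_ ?_
  · intro t; left
    show (1 - (t : ℝ)) * (1 - |2 * ((0:I) : ℝ) - 1|) ≤ 0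
    rw [show 2 * ((0:I) : ℝ) - 1 = -1 by norm_num, abs_neg, abs_one]
    norm_num
  · intro t; left
    show (1 - (t : ℝ)) * (1 - |2 * ((1:I) : ℝ) - 1|) ≤ 0
    rw [show 2 * ((1:I) : ℝ) - 1 = 1 by norm_num, abs_one]
    norm_num
  · intro y
    beta_reduce
    have hb0 : (0:ℝ) ≤ (y i : ℝ) := (y i).2.1
    have hb1 : (y i : ℝ) ≤ 1 := (y i).2.2
    rw [transAt_apply]; split_ifs with h
    · refine updpI_congr f i y ?_
      rw [abs_of_nonpos (by linarith : 2 * (y i : ℝ) - 1 ≤ 0)]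
      norm_num
    · rw [symmAt_apply]
      simp only [Function.update_self, Function.update_idem]
      push_neg at h
      rw [sigma_pI (by linarith) (by linarith)]
      refine updpI_congr f i y ?_
      rw [abs_of_nonneg (by linarith : (0:ℝ) ≤ 2 * (y i : ℝ) - 1)]
      norm_num
  · intro y
    beta_reduce
    show x₀ = _
    exact (apply_updpI_of_le f i y (by norm_num)).symm

/-- Associativity up to thin homotopy. -/
lemma thin_assoc (i : N) (f g h : Ω^ N X x₀) :
    ThinIn (Set.range (GenLoop.transAt i f (GenLoop.transAt i g h)).1)
      (GenLoop.transAt i (GenLoop.transAt i f g) h)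
      (GenLoop.transAt i f (GenLoop.transAt i g h)) := by
  refine thinIn_reparam (GenLoop.transAt i f (GenLoop.transAt i g h)) _ _ i
    (fun p => (1 - (p.1 : ℝ)) *
        min (2 * (p.2 : ℝ)) (min ((p.2 : ℝ) + 1/4) ((p.2 : ℝ)/2 + 1/2)) + (p.1 : ℝ) * (p.2 : ℝ))
      (by fun_prop) ?_ ?_ ?_ ?_
  · intro t; left
    show (1 - (t : ℝ)) * min (2 * ((0:I) : ℝ))
        (min (((0:I) : ℝ) + 1/4) (((0:I) : ℝ)/2 + 1/2)) + (t : ℝ) * ((0:I) : ℝ) ≤ 0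
    rw [show min (2 * ((0:I) : ℝ)) (min (((0:I) : ℝ) + 1/4) (((0:I) : ℝ)/2 + 1/2)) = 0 by
      rw [min_eq_left] <;> norm_num [min_le_iff]]
    norm_num
  · intro t; right
    show (1:ℝ) ≤ (1 - (t : ℝ)) * min (2 * ((1:I) : ℝ))
        (min (((1:I) : ℝ) + 1/4) (((1:I) : ℝ)/2 + 1/2)) + (t : ℝ) * ((1:I) : ℝ)
    rw [show min (2 * ((1:I) : ℝ)) (min (((1:I) : ℝ) + 1/4) (((1:I) : ℝ)/2 + 1/2)) = 1 by
      rw [min_eq_right, min_eq_right] <;> norm_num]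
    simp only [Set.Icc.coe_one, mul_one]; linarith
  · intro y
    beta_reduce
    have hb0 : (0:ℝ) ≤ (y i : ℝ) := (y i).2.1
    have hb1 : (y i : ℝ) ≤ 1 := (y i).2.2
    simp only [Set.Icc.coe_zero, one_mul, zero_mul, sub_zero, add_zero]
    rcases le_or_gt ((y i : ℝ)) (1/4) with h14 | h14
    · have hγ : min (2 * (y i : ℝ)) (min ((y i : ℝ) + 1/4) ((y i : ℝ)/2 + 1/2))
          = 2 * (y i : ℝ) := min_eq_left (le_min (by linarith) (by linarith))
      rw [hγ, transAt_apply, if_pos (by linarith : ((y i : I) : ℝ) ≤ 1/2),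
        transAt_apply_updpI i f g y (by linarith) (by linarith),
        if_pos (by linarith : 2 * ((y i : I) : ℝ) ≤ 1/2),
        transAt_apply_updpI i f (GenLoop.transAt i g h) y (by linarith) (by linarith),
        if_pos (by linarith : 2 * ((y i : I) : ℝ) ≤ 1/2)]
    · rcases le_or_gt ((y i : ℝ)) (1/2) with h12 | h12
      · have hγ : min (2 * (y i : ℝ)) (min ((y i : ℝ) + 1/4) ((y i : ℝ)/2 + 1/2))
            = (y i : ℝ) + 1/4 := by
          rw [min_eq_left (by linarith : (y i : ℝ) + 1/4 ≤ (y i : ℝ)/2 + 1/2)]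
          exact min_eq_right (by linarith)
        rw [hγ, transAt_apply, if_pos (by linarith : ((y i : I) : ℝ) ≤ 1/2),
          transAt_apply_updpI i f g y (by linarith) (by linarith),
          if_neg (by push_neg; linarith : ¬ 2 * ((y i : I) : ℝ) ≤ 1/2),
          transAt_apply_updpI i f (GenLoop.transAt i g h) y (by linarith) (by linarith),
          if_neg (by push_neg; linarith : ¬ ((y i : I) : ℝ) + 1/4 ≤ 1/2),
          transAt_apply_updpI i g h y (by linarith) (by linarith),
          if_pos (by linarith : 2 * (((y i : I) : ℝ) + 1/4) - 1 ≤ 1/2)]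
        exact updpI_congr g i y (by ring)
      · have hγ : min (2 * (y i : ℝ)) (min ((y i : ℝ) + 1/4) ((y i : ℝ)/2 + 1/2))
            = (y i : ℝ)/2 + 1/2 := by
          rw [min_eq_right (by linarith : (y i : ℝ)/2 + 1/2 ≤ (y i : ℝ) + 1/4)]
          exact min_eq_right (by linarith)
        rw [hγ, transAt_apply, if_neg (by push_neg; linarith : ¬ ((y i : I) : ℝ) ≤ 1/2),
          transAt_apply_updpI i f (GenLoop.transAt i g h) y (by linarith) (by linarith),
          if_neg (by push_neg; linarith : ¬ ((y i : I) : ℝ)/2 + 1/2 ≤ 1/2),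
          transAt_apply_updpI i g h y (by linarith) (by linarith),
          if_neg (by push_neg; linarith : ¬ 2 * (((y i : I) : ℝ)/2 + 1/2) - 1 ≤ 1/2)]
        exact updpI_congr h i y (by ring)
  · intro y
    beta_reduce
    simp only [Set.Icc.coe_one, one_mul, sub_self, zero_mul, zero_add]
    rw [pI_coe_I, Function.update_eq_self]

/-- Left congruence: concatenation with a fixed loop preserves thin homotopies. -/
lemma ThinIn.transAt_left {S : Set X} (i : N) {f f' : Ω^ N X x₀} (h : ThinIn S f f')
    (g : Ω^ N X x₀) :
    ThinIn (S ∪ Set.range g.1) (GenLoop.transAt i f g) (GenLoop.transAt i f' g) := by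
  obtain ⟨H, hH⟩ := h
  have hcont : Continuous (fun p : I × (I^ N) =>
      if ((p.2 i : ℝ)) ≤ 1 / 2 then H (p.1, update p.2 i (pI (2 * (p.2 i : ℝ))))
      else g.1 (update p.2 i (pI (2 * (p.2 i : ℝ) - 1)))) := by
    refine Continuous.if_le ?_ ?_ (by fun_prop) continuous_const ?_
    · exact H.continuous.comp (continuous_fst.prodMk (Continuous.update continuous_snd i
        (continuous_projIcc.comp (by fun_prop))))
    · exact g.1.continuous.comp (Continuous.update continuous_snd i
        (continuous_projIcc.comp (by fun_prop)))
    · intro p hp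
      have h1 : pI (2 * (p.2 i : ℝ)) = 1 := pI_one_of (by rw [hp]; norm_num)
      have h0 : pI (2 * (p.2 i : ℝ) - 1) = 0 := pI_zero_of (by rw [hp]; norm_num)
      rw [h1, h0, H.eq_fst p.1 (update_mem_boundary i p.2 (Or.inr rfl)),
        f.2 _ (update_mem_boundary i p.2 (Or.inr rfl)),
        g.2 _ (update_mem_boundary i p.2 (Or.inl rfl))]
  refine ⟨⟨⟨⟨fun p =>
      if ((p.2 i : ℝ)) ≤ 1 / 2 then H (p.1, update p.2 i (pI (2 * (p.2 i : ℝ))))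
      else g.1 (update p.2 i (pI (2 * (p.2 i : ℝ) - 1))), hcont⟩, ?_, ?_⟩, ?_⟩, ?_⟩
  · intro y
    show (if ((y i : ℝ)) ≤ 1 / 2 then H (0, update y i (pI (2 * (y i : ℝ))))
      else g.1 (update y i (pI (2 * (y i : ℝ) - 1)))) = _
    rw [transAt_apply]
    split_ifs with hle
    · exact H.apply_zero _
    · rfl
  · intro y
    show (if ((y i : ℝ)) ≤ 1 / 2 then H (1, update y i (pI (2 * (y i : ℝ))))
      else g.1 (update y i (pI (2 * (y i : ℝ) - 1)))) = _
    rw [transAt_apply]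
    split_ifs with hle
    · exact H.apply_one _
    · rfl
  · intro t y hy
    obtain ⟨j, hj⟩ := hy
    show (if ((y i : ℝ)) ≤ 1 / 2 then H (t, update y i (pI (2 * (y i : ℝ))))
      else g.1 (update y i (pI (2 * (y i : ℝ) - 1)))) = _
    rw [(GenLoop.transAt i f g).2 y ⟨j, hj⟩]
    split_ifs with hle
    · have hbd : update y i (pI (2 * (y i : ℝ))) ∈ Cube.boundary N := by
        rcases eq_or_ne j i with hji | hji
        · rw [hji] at hj
          rcases hj with hj | hj
          · exact update_mem_boundary i y (Or.inl (pI_zero_of (by rw [hj]; norm_num)))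
          · exfalso; rw [hj] at hle; norm_num at hle
        · exact update_mem_boundary_of_ne i _ hj hji
      rw [H.eq_fst t hbd, f.2 _ hbd]
    · have hbd : update y i (pI (2 * (y i : ℝ) - 1)) ∈ Cube.boundary N := by
        rcases eq_or_ne j i with hji | hji
        · rw [hji] at hj
          rcases hj with hj | hj
          · exfalso; rw [hj] at hle; norm_num at hle
          · exact update_mem_boundary i y (Or.inr (pI_one_of (by rw [hj]; norm_num)))
        · exact update_mem_boundary_of_ne i _ hj hji
      exact g.2 _ hbd
  · intro p
    show (if ((p.2 i : ℝ)) ≤ 1 / 2 then H (p.1, update p.2 i (pI (2 * (p.2 i : ℝ))))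
      else g.1 (update p.2 i (pI (2 * (p.2 i : ℝ) - 1)))) ∈ _
    split_ifs with hle
    · exact Or.inl (hH _)
    · exact Or.inr ⟨_, rfl⟩

/-- Right congruence: concatenation with a fixed loop preserves thin homotopies. -/
lemma ThinIn.transAt_right {S : Set X} (i : N) (f : Ω^ N X x₀) {g g' : Ω^ N X x₀}
    (h : ThinIn S g g') :
    ThinIn (Set.range f.1 ∪ S) (GenLoop.transAt i f g) (GenLoop.transAt i f g') := by
  obtain ⟨H, hH⟩ := h
  have hcont : Continuous (fun p : I × (I^ N) =>
      if ((p.2 i : ℝ)) ≤ 1 / 2 then f.1 (update p.2 i (pI (2 * (p.2 i : ℝ))))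
      else H (p.1, update p.2 i (pI (2 * (p.2 i : ℝ) - 1)))) := by
    refine Continuous.if_le ?_ ?_ (by fun_prop) continuous_const ?_
    · exact f.1.continuous.comp (Continuous.update continuous_snd i
        (continuous_projIcc.comp (by fun_prop)))
    · exact H.continuous.comp (continuous_fst.prodMk (Continuous.update continuous_snd i
        (continuous_projIcc.comp (by fun_prop))))
    · intro p hp
      have h1 : pI (2 * (p.2 i : ℝ)) = 1 := pI_one_of (by rw [hp]; norm_num)
      have h0 : pI (2 * (p.2 i : ℝ) - 1) = 0 := pI_zero_of (by rw [hp]; norm_num)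
      rw [h1, h0, H.eq_fst p.1 (update_mem_boundary i p.2 (Or.inl rfl)),
        f.2 _ (update_mem_boundary i p.2 (Or.inr rfl)),
        g.2 _ (update_mem_boundary i p.2 (Or.inl rfl))]
  refine ⟨⟨⟨⟨fun p =>
      if ((p.2 i : ℝ)) ≤ 1 / 2 then f.1 (update p.2 i (pI (2 * (p.2 i : ℝ))))
      else H (p.1, update p.2 i (pI (2 * (p.2 i : ℝ) - 1))), hcont⟩, ?_, ?_⟩, ?_⟩, ?_⟩
  · intro y
    show (if ((y i : ℝ)) ≤ 1 / 2 then f.1 (update y i (pI (2 * (y i : ℝ))))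
      else H (0, update y i (pI (2 * (y i : ℝ) - 1)))) = _
    rw [transAt_apply]
    split_ifs with hle
    · rfl
    · exact H.apply_zero _
  · intro y
    show (if ((y i : ℝ)) ≤ 1 / 2 then f.1 (update y i (pI (2 * (y i : ℝ))))
      else H (1, update y i (pI (2 * (y i : ℝ) - 1)))) = _
    rw [transAt_apply]
    split_ifs with hle
    · rfl
    · exact H.apply_one _
  · intro t y hy
    obtain ⟨j, hj⟩ := hy
    show (if ((y i : ℝ)) ≤ 1 / 2 then f.1 (update y i (pI (2 * (y i : ℝ))))
      else H (t, update y i (pI (2 * (y i : ℝ) - 1)))) = _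
    rw [(GenLoop.transAt i f g).2 y ⟨j, hj⟩]
    split_ifs with hle
    · have hbd : update y i (pI (2 * (y i : ℝ))) ∈ Cube.boundary N := by
        rcases eq_or_ne j i with hji | hji
        · rw [hji] at hj
          rcases hj with hj | hj
          · exact update_mem_boundary i y (Or.inl (pI_zero_of (by rw [hj]; norm_num)))
          · exfalso; rw [hj] at hle; norm_num at hle
        · exact update_mem_boundary_of_ne i _ hj hji
      exact f.2 _ hbd
    · have hbd : update y i (pI (2 * (y i : ℝ) - 1)) ∈ Cube.boundary N := by
        rcases eq_or_ne j i with hji | hji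
        · rw [hji] at hj
          rcases hj with hj | hj
          · exfalso; rw [hj] at hle; norm_num at hle
          · exact update_mem_boundary i y (Or.inr (pI_one_of (by rw [hj]; norm_num)))
        · exact update_mem_boundary_of_ne i _ hj hji
      rw [H.eq_fst t hbd, g.2 _ hbd]
  · intro p
    show (if ((p.2 i : ℝ)) ≤ 1 / 2 then f.1 (update p.2 i (pI (2 * (p.2 i : ℝ))))
      else H (p.1, update p.2 i (pI (2 * (p.2 i : ℝ) - 1)))) ∈ _
    split_ifs with hle
    · exact Or.inl ⟨_, rfl⟩
    · exact Or.inr (hH _)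

/-- Reversal preserves thin homotopies. -/
lemma ThinIn.symmAt_congr {S : Set X} (i : N) {f g : Ω^ N X x₀} (h : ThinIn S f g) :
    ThinIn S (GenLoop.symmAt i f) (GenLoop.symmAt i g) := by
  obtain ⟨H, hH⟩ := h
  have hcont : Continuous (fun p : I × (I^ N) => H (p.1, update p.2 i (σ (p.2 i)))) := by
    exact H.continuous.comp (continuous_fst.prodMk (Continuous.update continuous_snd i
      (unitInterval.continuous_symm.comp ((continuous_apply i).comp continuous_snd))))
  have hbd : ∀ y : I^ N, y ∈ Cube.boundary N → update y i (σ (y i)) ∈ Cube.boundary N := by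
    rintro y ⟨j, hj⟩
    rcases eq_or_ne j i with hji | hji
    · rw [hji] at hj
      rcases hj with hj | hj
      · exact update_mem_boundary i y (Or.inr (by rw [hj]; exact unitInterval.symm_zero))
      · exact update_mem_boundary i y (Or.inl (by rw [hj]; exact unitInterval.symm_one))
    · exact update_mem_boundary_of_ne i _ hj hji
  refine ⟨⟨⟨⟨fun p => H (p.1, update p.2 i (σ (p.2 i))), hcont⟩, ?_, ?_⟩, ?_⟩, fun p => hH _⟩
  · intro y
    show H (0, update y i (σ (y i))) = _
    rw [H.apply_zero, symmAt_apply]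
  · intro y
    show H (1, update y i (σ (y i))) = _
    rw [H.apply_one, symmAt_apply]
  · intro t y hy
    show H (t, update y i (σ (y i))) = _
    rw [symmAt_apply, H.eq_fst t (hbd y hy)]

lemma range_symmAt (i : N) (f : Ω^ N X x₀) :
    Set.range (GenLoop.symmAt i f).1 = Set.range f.1 := by
  apply subset_antisymm
  · rintro x ⟨y, rfl⟩
    rw [symmAt_apply]
    exact ⟨_, rfl⟩
  · rintro x ⟨y, rfl⟩
    refine ⟨update y i (σ (y i)), ?_⟩
    rw [symmAt_apply]
    simp only [Function.update_self, Function.update_idem, unitInterval.symm_symm,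
      Function.update_eq_self]

lemma ThinStep.symm' {f g : Ω^ N X x₀} (h : ThinStep f g) : ThinStep g f := by
  rw [thinStep_iff] at h ⊢
  exact (ThinIn.symm h).mono (Set.union_comm _ _).subset

lemma thinHomotopicN_iff_rtg {f g : Ω^ N X x₀} :
    ThinHomotopicN f g ↔ Relation.ReflTransGen ThinStep f g := by
  constructor
  · rintro ⟨n, c, h0, hl, hs⟩
    subst h0; subst hl
    have key : ∀ k : Fin (n + 1), Relation.ReflTransGen ThinStep (c 0) (c k) := by
      intro k
      induction k using Fin.induction with
      | zero => exact .refl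
      | succ k ih => exact ih.tail (hs k)
    exact key _
  · intro h
    induction h with
    | refl => exact ⟨0, fun _ => f, rfl, rfl, fun k => k.elim0⟩
    | @tail b c hab hbc ih =>
      obtain ⟨n, ch, h0, hl, hs⟩ := ih
      refine ⟨n + 1, Fin.snoc ch c, ?_, ?_, ?_⟩
      · rw [show (0 : Fin (n + 2)) = Fin.castSucc 0 from rfl, Fin.snoc_castSucc]
        exact h0
      · exact Fin.snoc_last _ _
      · intro k
        induction k using Fin.lastCases with
        | last =>
          rw [Fin.snoc_castSucc, Fin.succ_last, Fin.snoc_last, hl]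
          exact hbc
        | cast j =>
          rw [Fin.succ_castSucc, Fin.snoc_castSucc, Fin.snoc_castSucc]
          exact hs j

lemma ThinHomotopicN.refl' (f : Ω^ N X x₀) : ThinHomotopicN f f :=
  thinHomotopicN_iff_rtg.2 .refl

lemma ThinHomotopicN.trans' {f g h : Ω^ N X x₀} (h1 : ThinHomotopicN f g)
    (h2 : ThinHomotopicN g h) : ThinHomotopicN f h :=
  thinHomotopicN_iff_rtg.2 ((thinHomotopicN_iff_rtg.1 h1).trans (thinHomotopicN_iff_rtg.1 h2))

lemma thinStep_of_thinIn {S : Set X} {f g : Ω^ N X x₀} (h : ThinIn S f g)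
    (hS : S ⊆ Set.range f.1 ∪ Set.range g.1) : ThinStep f g :=
  (thinStep_iff f g).2 (h.mono hS)

lemma thinHomotopicN_of_thinIn {S : Set X} {f g : Ω^ N X x₀} (h : ThinIn S f g)
    (hS : S ⊆ Set.range f.1 ∪ Set.range g.1) : ThinHomotopicN f g :=
  thinHomotopicN_iff_rtg.2 (.single (thinStep_of_thinIn h hS))

lemma thinH_transAt_left (i : N) {f f' : Ω^ N X x₀} (h : ThinHomotopicN f f')
    (g : Ω^ N X x₀) : ThinHomotopicN (GenLoop.transAt i f g) (GenLoop.transAt i f' g) := by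
  rw [thinHomotopicN_iff_rtg] at h ⊢
  refine Relation.ReflTransGen.lift (fun a => GenLoop.transAt i a g) ?_ _ _ h
  intro a b hab
  refine thinStep_of_thinIn (((thinStep_iff a b).1 hab).transAt_left i g) ?_
  rintro x (( hx | hx) | hx)
  · exact Or.inl (range_transAt_left i a g hx)
  · exact Or.inr (range_transAt_left i b g hx)
  · exact Or.inl (range_transAt_right i a g hx)

lemma thinH_transAt_right (i : N) (f : Ω^ N X x₀) {g g' : Ω^ N X x₀}
    (h : ThinHomotopicN g g') :
    ThinHomotopicN (GenLoop.transAt i f g) (GenLoop.transAt i f g') := by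
  rw [thinHomotopicN_iff_rtg] at h ⊢
  refine Relation.ReflTransGen.lift (fun a => GenLoop.transAt i f a) ?_ _ _ h
  intro a b hab
  refine thinStep_of_thinIn (((thinStep_iff a b).1 hab).transAt_right i f) ?_
  rintro x (hx | (hx | hx))
  · exact Or.inl (range_transAt_left i f a hx)
  · exact Or.inl (range_transAt_right i f a hx)
  · exact Or.inr (range_transAt_right i f b hx)

lemma thinH_symmAt (i : N) {f g : Ω^ N X x₀} (h : ThinHomotopicN f g) :
    ThinHomotopicN (GenLoop.symmAt i f) (GenLoop.symmAt i g) := by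
  rw [thinHomotopicN_iff_rtg] at h ⊢
  refine Relation.ReflTransGen.lift (GenLoop.symmAt i) ?_ _ _ h
  intro a b hab
  refine thinStep_of_thinIn (((thinStep_iff a b).1 hab).symmAt_congr i) ?_
  rw [range_symmAt, range_symmAt]

/-- The Eckmann–Hilton argument, by thin homotopies. -/
lemma thin_comm [Nonempty N] (i j : N) (hij : j ≠ i) (f g : Ω^ N X x₀) :
    ThinIn (Set.range f.1 ∪ Set.range g.1) (GenLoop.transAt i f g) (GenLoop.transAt i g f) := by
  set S := Set.range f.1 ∪ Set.range g.1 with hS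
  set e : Ω^ N X x₀ := GenLoop.const with he'
  have hx : x₀ ∈ S := Or.inl (basept_mem_range f)
  have hrf : Set.range f.1 ⊆ S := Set.subset_union_left
  have hrg : Set.range g.1 ⊆ S := Set.subset_union_right
  have hre : Set.range e.1 ⊆ S := range_const_subset hx
  have hfe : Set.range (GenLoop.transAt j f e).1 ⊆ S :=
    (range_transAt_subset j f e).trans (Set.union_subset hrf hre)
  have hef : Set.range (GenLoop.transAt i e f).1 ⊆ S :=
    (range_transAt_subset i e f).trans (Set.union_subset hre hrf)
  have heg : Set.range (GenLoop.transAt i e g).1 ⊆ S :=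
    (range_transAt_subset i e g).trans (Set.union_subset hre hrg)
  have hge : Set.range (GenLoop.transAt i g e).1 ⊆ S :=
    (range_transAt_subset i g e).trans (Set.union_subset hrg hre)
  have hejg : Set.range (GenLoop.transAt j e g).1 ⊆ S :=
    (range_transAt_subset j e g).trans (Set.union_subset hre hrg)
  have s1 : ThinIn S (GenLoop.transAt i f g) (GenLoop.transAt i (GenLoop.transAt j f e) g) :=
    (((thin_mul_one j f).symm).transAt_left i g).mono (Set.union_subset hrf hrg)
  have s2 : ThinIn S (GenLoop.transAt i (GenLoop.transAt j f e) g)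
      (GenLoop.transAt i (GenLoop.transAt j f e) (GenLoop.transAt j e g)) :=
    (((thin_one_mul j g).symm).transAt_right i _).mono (Set.union_subset hfe hrg)
  have s3 : GenLoop.transAt i (GenLoop.transAt j f e) (GenLoop.transAt j e g) =
      GenLoop.transAt j (GenLoop.transAt i f e) (GenLoop.transAt i e g) :=
    GenLoop.transAt_distrib hij.symm f e e g
  have s4 : ThinIn S (GenLoop.transAt j (GenLoop.transAt i f e) (GenLoop.transAt i e g))
      (GenLoop.transAt j (GenLoop.transAt i e f) (GenLoop.transAt i e g)) :=
    ((thin_slide i f).transAt_left j _).mono (Set.union_subset hrf heg)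
  have s5 : ThinIn S (GenLoop.transAt j (GenLoop.transAt i e f) (GenLoop.transAt i e g))
      (GenLoop.transAt j (GenLoop.transAt i e f) (GenLoop.transAt i g e)) :=
    (((thin_slide i g).symm).transAt_right j _).mono (Set.union_subset hef hrg)
  have s6 : GenLoop.transAt j (GenLoop.transAt i e f) (GenLoop.transAt i g e) =
      GenLoop.transAt i (GenLoop.transAt j e g) (GenLoop.transAt j f e) :=
    GenLoop.transAt_distrib hij e f g e
  have s7 : ThinIn S (GenLoop.transAt i (GenLoop.transAt j e g) (GenLoop.transAt j f e))
      (GenLoop.transAt i g (GenLoop.transAt j f e)) :=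
    ((thin_one_mul j g).transAt_left i _).mono (Set.union_subset hrg hfe)
  have s8 : ThinIn S (GenLoop.transAt i g (GenLoop.transAt j f e))
      (GenLoop.transAt i g f) :=
    ((thin_mul_one j f).transAt_right i g).mono (Set.union_subset hrg hrf)
  rw [s3] at s2
  rw [s6] at s5
  exact s1.trans (s2.trans (s4.trans (s5.trans (s7.trans s8))))

lemma thinH_comm [Nonempty N] (i j : N) (hij : j ≠ i) (f g : Ω^ N X x₀) :
    ThinHomotopicN (GenLoop.transAt i f g) (GenLoop.transAt i g f) := by
  refine thinHomotopicN_of_thinIn (thin_comm i j hij f g) ?_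
  exact fun x hx => Or.inl ((Set.union_subset (range_transAt_left i f g)
    (range_transAt_right i f g)) hx)

lemma thinH_assoc (i : N) (f g h : Ω^ N X x₀) :
    ThinHomotopicN (GenLoop.transAt i (GenLoop.transAt i f g) h)
      (GenLoop.transAt i f (GenLoop.transAt i g h)) :=
  thinHomotopicN_of_thinIn (thin_assoc i f g h) Set.subset_union_right

lemma thinH_one_mul (i : N) (f : Ω^ N X x₀) :
    ThinHomotopicN (GenLoop.transAt i GenLoop.const f) f :=
  thinHomotopicN_of_thinIn (thin_one_mul i f) Set.subset_union_right

lemma thinH_mul_one (i : N) (f : Ω^ N X x₀) :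
    ThinHomotopicN (GenLoop.transAt i f GenLoop.const) f :=
  thinHomotopicN_of_thinIn (thin_mul_one i f) Set.subset_union_right

lemma thinH_inv_mul (i : N) (f : Ω^ N X x₀) :
    ThinHomotopicN (GenLoop.transAt i (GenLoop.symmAt i f) f) GenLoop.const :=
  thinHomotopicN_of_thinIn (thin_inv_mul i f)
    (fun x hx => Or.inl (range_transAt_right i _ f hx))

lemma thinH_mul_inv (i : N) (f : Ω^ N X x₀) :
    ThinHomotopicN (GenLoop.transAt i f (GenLoop.symmAt i f)) GenLoop.const :=
  thinHomotopicN_of_thinIn (thin_mul_inv i f)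
    (fun x hx => Or.inl (range_transAt_left i f _ hx))

/-- Multiplication on the thin quotient. -/
noncomputable def qmul (i : N) :
    Quot (@ThinHomotopicN X _ x₀ N) → Quot (@ThinHomotopicN X _ x₀ N) →
      Quot (@ThinHomotopicN X _ x₀ N) :=
  Quot.lift
    (fun f => Quot.lift (fun g => Quot.mk _ (GenLoop.transAt i f g))
      (fun g g' h => Quot.sound (thinH_transAt_right i f h)))
    (fun f f' h => by
      funext a
      induction a using Quot.ind with
      | _ g => exact Quot.sound (thinH_transAt_left i h g))

/-- Inversion on the thin quotient. -/
noncomputable def qinv (i : N) : Quot (@ThinHomotopicN X _ x₀ N) → Quot (@ThinHomotopicN X _ x₀ N) :=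
  Quot.lift (fun f => Quot.mk _ (GenLoop.symmAt i f))
    (fun f f' h => Quot.sound (thinH_symmAt i h))

end ThinPf


/-- For `n ≥ 2`, the `n`-th thin loop group `πₙ¹(X)` is an abelian group (with product
induced by concatenation of `n`-loops); moreover the Eckmann–Hilton interchange homotopy
between `f·g` and `g·f` can be realized by a thin homotopy, i.e. one whose image is
contained in the union of the images of `f` and `g`. -/
theorem thinHomotopyGroup_comm (n : ℕ) (hn : 2 ≤ n) (X : Type*) [TopologicalSpace X]
    (x₀ : X) (i : Fin n) :
    (∃ (mul : ThinHomotopyGroup n X x₀ → ThinHomotopyGroup n X x₀ → ThinHomotopyGroup n X x₀)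
      (one : ThinHomotopyGroup n X x₀)
      (inv : ThinHomotopyGroup n X x₀ → ThinHomotopyGroup n X x₀),
      (∀ f g : Ω^ (Fin n) X x₀,
        mul (Quot.mk _ f) (Quot.mk _ g) = Quot.mk _ (GenLoop.transAt i f g)) ∧
      (one = Quot.mk _ (GenLoop.const)) ∧
      (∀ a b c, mul (mul a b) c = mul a (mul b c)) ∧
      (∀ a, mul one a = a) ∧ (∀ a, mul a one = a) ∧
      (∀ a, mul (inv a) a = one) ∧ (∀ a, mul a (inv a) = one) ∧
      (∀ a b, mul a b = mul b a)) ∧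
    (∀ f g : Ω^ (Fin n) X x₀,
      ∃ H : ContinuousMap.HomotopyRel (GenLoop.transAt i f g).1 (GenLoop.transAt i g f).1
          (Cube.boundary (Fin n)),
        ∀ p : unitInterval × (I^ (Fin n)), H p ∈ Set.range f.1 ∪ Set.range g.1) := by
  haveI : Nonempty (Fin n) := ⟨i⟩
  have hex : ∃ j : Fin n, j ≠ i := by
    rcases eq_or_ne (i : ℕ) 0 with h | h
    · refine ⟨⟨1, by omega⟩, fun hc => ?_⟩
      have hv : (1 : ℕ) = (i : ℕ) := congrArg Fin.val hc
      omega
    · refine ⟨⟨0, by omega⟩, fun hc => ?_⟩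
      have hv : (0 : ℕ) = (i : ℕ) := congrArg Fin.val hc
      omega
  obtain ⟨j, hij⟩ := hex
  constructor
  · refine ⟨ThinPf.qmul i, Quot.mk _ GenLoop.const, ThinPf.qinv i,
      fun f g => rfl, rfl, ?_, ?_, ?_, ?_, ?_, ?_⟩
    · intro a b c
      induction a using Quot.ind with | _ f =>
      induction b using Quot.ind with | _ g =>
      induction c using Quot.ind with | _ h =>
      exact Quot.sound (ThinPf.thinH_assoc i f g h)
    · intro a
      induction a using Quot.ind with | _ f =>
      exact Quot.sound (ThinPf.thinH_one_mul i f)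
    · intro a
      induction a using Quot.ind with | _ f =>
      exact Quot.sound (ThinPf.thinH_mul_one i f)
    · intro a
      induction a using Quot.ind with | _ f =>
      exact Quot.sound (ThinPf.thinH_inv_mul i f)
    · intro a
      induction a using Quot.ind with | _ f =>
      exact Quot.sound (ThinPf.thinH_mul_inv i f)
    · intro a b
      induction a using Quot.ind with | _ f =>
      induction b using Quot.ind with | _ g =>
      exact Quot.sound (ThinPf.thinH_comm i j hij f g)
  · intro f g
    obtain ⟨H, hH⟩ := ThinPf.thin_comm i j hij f g
    exact ⟨H, hH⟩
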